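/- Let X be a Hausdorff locally convex space and let {F_ι : X → X}_{ι∈I} be a sequentially equicontinuous family of linear operators. Then the family is equibounded: for every bounded subset D ⊆ X, the set {F_ι(x) : ι∈I, x∈D} is bounded in X. -/

import Mathlib

open Filter Topology Pointwise

/-- A sequentially equicontinuous family of linear operators on a Hausdorff
locally convex space is equibounded: it maps every bounded set to a bounded set, uniformly
in the family parameter. -/
theorem stmt4 {X : Type*}
    [AddCommGroup X] [Module ℝ X] [TopologicalSpace X] [IsTopologicalAddGroup X]
    [ContinuousSMul ℝ X] [LocallyConvexSpace ℝ X] [T2Space X]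
    {I : Type*} (F : I → X →ₗ[ℝ] X)
    (hF : ∀ (u : ℕ → X) (a : X), Tendsto u atTop (𝓝 a) → ∀ U ∈ 𝓝 (0 : X),
      ∀ᶠ n in atTop, ∀ i, F i (u n) - F i a ∈ U)
    (D : Set X) (hD : Bornology.IsVonNBounded ℝ D) :
    Bornology.IsVonNBounded ℝ {y : X | ∃ i, ∃ x ∈ D, F i x = y} := by
  intro V hV
  obtain ⟨W, ⟨hW, hWb⟩, hWV⟩ := (nhds_basis_balanced ℝ X).mem_iff.mp hV
  suffices h : Absorbs ℝ W {y : X | ∃ i, ∃ x ∈ D, F i x = y} from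
    h.mono_left hWV
  by_contra h
  rw [absorbs_iff_norm] at h
  push_neg at h
  -- For each n, get a failure at scalar (n+1)^2
  have key : ∀ n : ℕ, ∃ i, ∃ x ∈ D, F i x ∉ (((n : ℝ) + 1) ^ 2) • W := by
    intro n
    obtain ⟨c, hc, hcsub⟩ := h (((n : ℝ) + 1) ^ 2)
    have hsub : (((n : ℝ) + 1) ^ 2) • W ⊆ c • W := by
      apply hWb.smul_mono
      rw [Real.norm_eq_abs (((n : ℝ) + 1) ^ 2),
        abs_of_nonneg (by positivity : (0:ℝ) ≤ ((n : ℝ) + 1) ^ 2)]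
      exact hc
    have : ¬ {y : X | ∃ i, ∃ x ∈ D, F i x = y} ⊆ (((n : ℝ) + 1) ^ 2) • W :=
      fun hs => hcsub (hs.trans hsub)
    obtain ⟨y, ⟨i, x, hxD, hFxy⟩, hyW⟩ := Set.not_subset.mp this
    exact ⟨i, x, hxD, hFxy ▸ hyW⟩
  choose i x hxD hxW using key
  set u : ℕ → X := fun n => ((n : ℝ) + 1)⁻¹ • x n with hu
  have hu0 : Tendsto u atTop (𝓝 0) := by
    have hε : Tendsto (fun n : ℕ => ((n : ℝ) + 1)⁻¹) atTop (𝓝 0) :=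
      tendsto_one_div_add_atTop_nhds_zero_nat.congr (by simp [one_div])
    exact hD.smul_tendsto_zero (Eventually.of_forall hxD) hε
  have := hF u 0 hu0 W hW
  obtain ⟨n, hn⟩ := this.exists
  have hn' := hn (i n)
  rw [map_zero, sub_zero, hu] at hn'
  have hne : ((n : ℝ) + 1) ≠ 0 := by positivity
  have hmem : F (i n) (x n) ∈ ((n : ℝ) + 1) • W := by
    have : ((n : ℝ) + 1) • F (i n) (((n : ℝ) + 1)⁻¹ • x n) ∈ ((n : ℝ) + 1) • W :=
      Set.smul_mem_smul_set hn'
    rwa [map_smul, smul_smul, mul_inv_cancel₀ hne, one_smul] at this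
  have hsub2 : ((n : ℝ) + 1) • W ⊆ (((n : ℝ) + 1) ^ 2) • W := by
    apply hWb.smul_mono
    rw [Real.norm_eq_abs, Real.norm_eq_abs, abs_of_nonneg (by positivity),
      abs_of_nonneg (by positivity)]
    nlinarith [Nat.cast_nonneg (α := ℝ) n]
  exact hxW n (hsub2 hmem)
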